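/- Let A be a complex unital Banach algebra, let R ∈ A, let n ≥ 1, let v ≥ 0 and t ≥ 0, and let V₁, …, Vₙ : ℝ → A be continuous maps with ‖Vⱼ(u)‖ ≤ v for all u ∈ [0, t] and all j. Define M₀ : ℝ → A by M₀(r) = R, and recursively, for 1 ≤ j ≤ n, Mⱼ(r) = ∫₀ʳ (Mⱼ₋₁(s) Vⱼ(s) − Vⱼ(s) Mⱼ₋₁(s)) ds (Bochner integral in A of the continuous integrand). Then for all s with 0 ≤ s ≤ t one has ‖Mₙ(t) − Mₙ(s)‖ ≤ 2ⁿ vⁿ ‖R‖ (tⁿ − sⁿ)/n!. -/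

import Mathlib

open MeasureTheory intervalIntegral

/-- Lemma 3.1(i): norm estimate for the iterated commutator integrals (Dyson terms).
With `M₀ ≡ R` and `Mⱼ(r) = ∫₀ʳ [Mⱼ₋₁(s), Vⱼ(s)] ds`, one has
`‖Mₙ(t) − Mₙ(s)‖ ≤ 2ⁿ vⁿ ‖R‖ (tⁿ − sⁿ)/n!` for `0 ≤ s ≤ t`. -/
theorem stmt2 {A : Type*} [NormedRing A] [NormedAlgebra ℂ A] [CompleteSpace A]
    (R : A) (n : ℕ) (hn : 1 ≤ n) (v t : ℝ) (hv : 0 ≤ v) (ht : 0 ≤ t)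
    (V : ℕ → ℝ → A)
    (hVcont : ∀ j, 1 ≤ j → j ≤ n → Continuous (V j))
    (hVbound : ∀ j, 1 ≤ j → j ≤ n → ∀ u ∈ Set.Icc (0 : ℝ) t, ‖V j u‖ ≤ v)
    (M : ℕ → ℝ → A)
    (hM0 : ∀ r : ℝ, M 0 r = R)
    (hMrec : ∀ j, 1 ≤ j → j ≤ n → ∀ r : ℝ,
      M j r = ∫ s in (0 : ℝ)..r, (M (j - 1) s * V j s - V j s * M (j - 1) s)) :
    ∀ s : ℝ, 0 ≤ s → s ≤ t →
      ‖M n t - M n s‖ ≤ 2 ^ n * v ^ n * ‖R‖ * (t ^ n - s ^ n) / n.factorial := by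
  obtain ⟨m, rfl⟩ : ∃ m, n = m + 1 := ⟨n - 1, by omega⟩
  -- continuity of each M j
  have hcont : ∀ j, j ≤ m + 1 → Continuous (M j) := by
    intro j
    induction j with
    | zero =>
      intro _
      have h : M 0 = fun _ => R := funext hM0
      rw [h]; exact continuous_const
    | succ k ih =>
      intro hk
      have hMk := ih (by omega)
      have hVc := hVcont (k + 1) (by omega) hk
      have hf : Continuous fun s => M k s * V (k + 1) s - V (k + 1) s * M k s :=
        (hMk.mul hVc).sub (hVc.mul hMk)
      have h : M (k + 1) = fun r =>
          ∫ s in (0 : ℝ)..r, (M k s * V (k + 1) s - V (k + 1) s * M k s) := by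
        funext r; simpa using hMrec (k + 1) (by omega) hk r
      rw [h]
      exact intervalIntegral.continuous_primitive (fun a b => hf.intervalIntegrable a b) 0
  -- pointwise bound on the commutator integrand
  have hib : ∀ k, k + 1 ≤ m + 1 →
      (∀ r ∈ Set.Icc (0 : ℝ) t, ‖M k r‖ ≤ (2 * v) ^ k * ‖R‖ * r ^ k / k.factorial) →
      ∀ u ∈ Set.Icc (0 : ℝ) t,
        ‖M k u * V (k + 1) u - V (k + 1) u * M k u‖ ≤
          (2 * v) ^ (k + 1) * ‖R‖ / k.factorial * u ^ k := by
    intro k hk hMb u hu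
    have hV := hVbound (k + 1) (by omega) hk u hu
    have hM := hMb u hu
    have hfac : (0 : ℝ) < (k.factorial : ℝ) := by positivity
    calc ‖M k u * V (k + 1) u - V (k + 1) u * M k u‖
        ≤ ‖M k u * V (k + 1) u‖ + ‖V (k + 1) u * M k u‖ := norm_sub_le _ _
      _ ≤ ‖M k u‖ * ‖V (k + 1) u‖ + ‖V (k + 1) u‖ * ‖M k u‖ :=
          add_le_add (norm_mul_le _ _) (norm_mul_le _ _)
      _ = 2 * (‖V (k + 1) u‖ * ‖M k u‖) := by ring
      _ ≤ 2 * (v * ((2 * v) ^ k * ‖R‖ * u ^ k / k.factorial)) := by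
          gcongr
      _ = (2 * v) ^ (k + 1) * ‖R‖ / k.factorial * u ^ k := by
          field_simp
          ring
  -- inductive norm bound
  have key : ∀ j, j ≤ m + 1 → ∀ r ∈ Set.Icc (0 : ℝ) t,
      ‖M j r‖ ≤ (2 * v) ^ j * ‖R‖ * r ^ j / j.factorial := by
    intro j
    induction j with
    | zero => intro _ r _; simp [hM0]
    | succ k ih =>
      intro hk r hr
      have hMk := hcont k (by omega)
      have hVc := hVcont (k + 1) (by omega) hk
      have hf : Continuous fun s => M k s * V (k + 1) s - V (k + 1) s * M k s :=
        (hMk.mul hVc).sub (hVc.mul hMk)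
      have hbnd := hib k hk (ih (by omega))
      have hr0 : (0 : ℝ) ≤ r := hr.1
      have hg : Continuous fun u : ℝ => (2 * v) ^ (k + 1) * ‖R‖ / k.factorial * u ^ k :=
        continuous_const.mul (continuous_pow k)
      rw [hMrec (k + 1) (by omega) hk r]
      simp only [Nat.add_sub_cancel]
      calc ‖∫ s in (0 : ℝ)..r, (M k s * V (k + 1) s - V (k + 1) s * M k s)‖
          ≤ ∫ s in (0 : ℝ)..r, ‖M k s * V (k + 1) s - V (k + 1) s * M k s‖ :=
            intervalIntegral.norm_integral_le_integral_norm hr0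
        _ ≤ ∫ s in (0 : ℝ)..r, (2 * v) ^ (k + 1) * ‖R‖ / k.factorial * s ^ k := by
            apply intervalIntegral.integral_mono_on hr0
              (hf.norm.intervalIntegrable _ _) (hg.intervalIntegrable _ _)
            intro u hu
            exact hbnd u ⟨hu.1, hu.2.trans hr.2⟩
        _ = (2 * v) ^ (k + 1) * ‖R‖ / k.factorial * ((r ^ (k + 1) - 0 ^ (k + 1)) / (k + 1)) := by
            rw [intervalIntegral.integral_const_mul, integral_pow]
        _ = (2 * v) ^ (k + 1) * ‖R‖ * r ^ (k + 1) / (k + 1).factorial := by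
            rw [Nat.factorial_succ]
            have hfac : (0 : ℝ) < (k.factorial : ℝ) := by positivity
            push_cast
            rw [zero_pow (by omega)]
            field_simp
            ring_nf
  -- final estimate
  intro s hs hst
  have hMk := hcont m (by omega)
  have hVc := hVcont (m + 1) (by omega) le_rfl
  have hf : Continuous fun u => M m u * V (m + 1) u - V (m + 1) u * M m u :=
    (hMk.mul hVc).sub (hVc.mul hMk)
  have hbnd := hib m le_rfl (key m (by omega))
  have hdiff : M (m + 1) t - M (m + 1) s =
      ∫ u in s..t, (M m u * V (m + 1) u - V (m + 1) u * M m u) := by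
    rw [hMrec (m + 1) (by omega) le_rfl t, hMrec (m + 1) (by omega) le_rfl s]
    simpa using intervalIntegral.integral_interval_sub_left
      (hf.intervalIntegrable 0 t) (hf.intervalIntegrable 0 s)
  have hg : Continuous fun u : ℝ => (2 * v) ^ (m + 1) * ‖R‖ / m.factorial * u ^ m :=
    continuous_const.mul (continuous_pow m)
  rw [hdiff]
  calc ‖∫ u in s..t, (M m u * V (m + 1) u - V (m + 1) u * M m u)‖
      ≤ ∫ u in s..t, ‖M m u * V (m + 1) u - V (m + 1) u * M m u‖ :=
        intervalIntegral.norm_integral_le_integral_norm hst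
    _ ≤ ∫ u in s..t, (2 * v) ^ (m + 1) * ‖R‖ / m.factorial * u ^ m := by
        apply intervalIntegral.integral_mono_on hst
          (hf.norm.intervalIntegrable _ _) (hg.intervalIntegrable _ _)
        intro u hu
        exact hbnd u ⟨hs.trans hu.1, hu.2⟩
    _ = (2 * v) ^ (m + 1) * ‖R‖ / m.factorial * ((t ^ (m + 1) - s ^ (m + 1)) / (m + 1)) := by
        rw [intervalIntegral.integral_const_mul, integral_pow]
    _ = 2 ^ (m + 1) * v ^ (m + 1) * ‖R‖ * (t ^ (m + 1) - s ^ (m + 1)) / (m + 1).factorial := by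
        rw [Nat.factorial_succ, mul_pow]
        have hfac : (0 : ℝ) < (m.factorial : ℝ) := by positivity
        push_cast
        field_simp
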